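/- Monotonicity of the relative value iteration (RVIA) iterates (Lemma 2): fix a reference state Q† ∈ 𝒬 and define V_0(Q) = 0 for all Q ∈ 𝒬 and, for l ≥ 0, V_{l+1}(Q) = min_{u∈𝒰} J_{V_l}(Q,u) − min_{u∈𝒰} J_{V_l}(Q†,u). Then for every l ≥ 0 and all states Q¹ ⪯ Q², one has V_l(Q¹) ≤ V_l(Q²); i.e., every RVIA iterate is monotone with respect to the componentwise order. -/

import Mathlib

open Finset

namespace HetNet

/-- The queue index set `I = {(n,m) : 0 ≤ n ≤ N, m ∈ M_n}`. -/
abbrev Idx {N M : ℕ} (cache : Fin (N + 1) → Finset (Fin M)) : Type :=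
  {p : Fin (N + 1) × Fin M // p.2 ∈ cache p.1}

/-- The feasible action space `𝒰`: each BS schedules a cached content or idles (`none`),
and the MBS (BS `0`) and the SBSs do not operate concurrently. -/
def Feasible {N M : ℕ} (cache : Fin (N + 1) → Finset (Fin M))
    (u : Fin (N + 1) → Option (Fin M)) : Prop :=
  (∀ n m, u n = some m → m ∈ cache n) ∧ (u 0 ≠ none → ∀ n, n ≠ 0 → u n = none)

instance {N M : ℕ} (cache : Fin (N + 1) → Finset (Fin M)) :
    DecidablePred (Feasible cache) := by
  intro u; unfold Feasible; infer_instance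

instance {N M : ℕ} (cache : Fin (N + 1) → Finset (Fin M)) :
    Nonempty {u : Fin (N + 1) → Option (Fin M) // Feasible cache u} :=
  ⟨⟨fun _ => none, by
    unfold Feasible; exact ⟨fun _ _ h => by simp at h, fun h => absurd rfl h⟩⟩⟩

/-- Queue `(n,m)` is served by action `u`. -/
def Served {N M : ℕ} (u : Fin (N + 1) → Option (Fin M)) (n : Fin (N + 1)) (m : Fin M) : Prop :=
  (n = 0 ∧ u 0 = some m) ∨ (n ≠ 0 ∧ (u 0 = some m ∨ u n = some m))

instance {N M : ℕ} (u : Fin (N + 1) → Option (Fin M)) (n : Fin (N + 1)) (m : Fin M) :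
    Decidable (Served u n m) := by unfold Served; infer_instance

/-- The queue transition map `T(Q,u,A)`. -/
def T {N M : ℕ} {cache : Fin (N + 1) → Finset (Fin M)} (bound : Idx cache → ℕ)
    (Q : Idx cache → ℕ) (u : Fin (N + 1) → Option (Fin M)) (A : Idx cache → ℕ) :
    Idx cache → ℕ := fun i =>
  if Served u i.val.1 i.val.2 then min (A i) (bound i) else min (Q i + A i) (bound i)

/-- The network power cost `p(u) = Σ_n p(n, u_n)` (with `p(n,0) = 0` for an idling BS). -/
def pcost {N M : ℕ} (p : Fin (N + 1) → Fin M → ℝ) (u : Fin (N + 1) → Option (Fin M)) : ℝ :=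
  ∑ n, (u n).elim 0 (p n)

/-- The sum request queue length `d(Q)`. -/
def dcost {N M : ℕ} {cache : Fin (N + 1) → Finset (Fin M)} (Q : Idx cache → ℕ) : ℝ :=
  ∑ i, (Q i : ℝ)

/-- The per-stage cost `g(Q,u) = d(Q) + w·p(u)`. -/
def gcost {N M : ℕ} (p : Fin (N + 1) → Fin M → ℝ) (w : ℝ)
    {cache : Fin (N + 1) → Finset (Fin M)}
    (Q : Idx cache → ℕ) (u : Fin (N + 1) → Option (Fin M)) : ℝ :=
  dcost Q + w * pcost p u

/-- The state-action cost `J_V(Q,u) = g(Q,u) + Σ_{A∈𝒜} P(A)·V(T(Q,u,A))`. -/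
def Jcost {N M : ℕ} (p : Fin (N + 1) → Fin M → ℝ) (w : ℝ)
    {cache : Fin (N + 1) → Finset (Fin M)} (bound : Idx cache → ℕ)
    {ι : Type} [Fintype ι] (P : ι → ℝ) (A : ι → Idx cache → ℕ)
    (V : (Idx cache → ℕ) → ℝ) (Q : Idx cache → ℕ)
    (u : Fin (N + 1) → Option (Fin M)) : ℝ :=
  gcost p w Q u + ∑ a, P a * V (T bound Q u (A a))

/-- Lemma 2: monotonicity of the RVIA iterates: fix a reference state
`Q† ∈ 𝒬` and define `V_0 ≡ 0` and
`V_{l+1}(Q) = min_{u∈𝒰} J_{V_l}(Q,u) − min_{u∈𝒰} J_{V_l}(Q†,u)`.  Then every RVIA iterate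
`V_l` is monotone w.r.t. the componentwise order on `𝒬`. -/
theorem rvia_iterates_monotone {N M : ℕ} (cache : Fin (N + 1) → Finset (Fin M))
    (hcache0 : ∀ m : Fin M, m ∈ cache 0)
    (bound : Idx cache → ℕ)
    (p : Fin (N + 1) → Fin M → ℝ) (hp : ∀ n m, 0 ≤ p n m)
    (w : ℝ) (hw : 0 ≤ w)
    {ι : Type} [Fintype ι] (P : ι → ℝ) (A : ι → Idx cache → ℕ)
    (hP : ∀ a, 0 ≤ P a) (hPsum : ∑ a, P a = 1)
    (Qd : Idx cache → ℕ) (hQd : ∀ i, Qd i ≤ bound i)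
    (Vs : ℕ → (Idx cache → ℕ) → ℝ)
    (h0 : ∀ Q, Vs 0 Q = 0)
    (hrec : ∀ l Q, Vs (l + 1) Q =
      (⨅ u : {u // Feasible cache u}, Jcost p w bound P A (Vs l) Q u.val) -
        (⨅ u : {u // Feasible cache u}, Jcost p w bound P A (Vs l) Qd u.val)) :
    ∀ l : ℕ, ∀ Q₁ Q₂ : Idx cache → ℕ, (∀ i, Q₁ i ≤ bound i) → (∀ i, Q₂ i ≤ bound i) →
      (∀ i, Q₁ i ≤ Q₂ i) → Vs l Q₁ ≤ Vs l Q₂ := by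

    intro l
    induction l with
    | zero => intro Q₁ Q₂ _ _ _; simp [h0]
    | succ l ih =>
      intro Q₁ Q₂ h₁ h₂ h12
      rw [hrec, hrec]
      have key : ∀ u : {u // Feasible cache u},
          Jcost p w bound P A (Vs l) Q₁ u.val ≤ Jcost p w bound P A (Vs l) Q₂ u.val := by
        intro u
        unfold Jcost gcost dcost
        have hd : (∑ i, (Q₁ i : ℝ)) ≤ ∑ i, (Q₂ i : ℝ) :=
          Finset.sum_le_sum (fun i _ => Nat.cast_le.mpr (h12 i))
        have hs : (∑ a, P a * Vs l (T bound Q₁ u.val (A a)))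
            ≤ ∑ a, P a * Vs l (T bound Q₂ u.val (A a)) := by
          refine Finset.sum_le_sum (fun a _ => mul_le_mul_of_nonneg_left ?_ (hP a))
          refine ih _ _ (fun i => ?_) (fun i => ?_) (fun i => ?_)
          · unfold T; split <;> exact min_le_right _ _
          · unfold T; split <;> exact min_le_right _ _
          · unfold T; split
            · exact le_rfl
            · exact min_le_min (Nat.add_le_add_right (h12 i) _) le_rfl
        linarith
      have hbdd : BddBelow (Set.range fun u : {u // Feasible cache u} =>
          Jcost p w bound P A (Vs l) Q₁ u.val) := (Set.finite_range _).bddBelow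
      exact sub_le_sub_right (ciInf_mono hbdd key) _


end HetNet
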